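/- arXiv:1411.1217 — 4 statements merged into one kernel-verified Lean document; each statement's English description precedes it below -/
import Mathlib

section
/- For any complex n×n matrix A, any ε > 0 and any k ∈ ℕ, the operator 2-norm satisfies ‖A^k‖ ≤ √n (1 + 2/ε)^{n−1} (ρ(A) + ε‖A‖)^k, where ρ(A) is the spectral radius of A. -/
open scoped Matrix.Norms.L2Operator InnerProductSpace Matrix

/-- The operator 2-norm of a complex square matrix. -/
noncomputable def opNorm {n : ℕ} (A : Matrix (Fin n) (Fin n) ℂ) : ℝ :=
  ‖Matrix.toEuclideanCLM (𝕜 := ℂ) A‖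

/-- The spectral radius of a complex square matrix: the maximum modulus of its
eigenvalues. -/
noncomputable def specRad {n : ℕ} (A : Matrix (Fin n) (Fin n) ℂ) : ℝ :=
  sSup ((fun z : ℂ => ‖z‖) '' spectrum ℂ A)

open scoped InnerProductSpace

open Module Submodule in

lemma schur_exists : ∀ (n : ℕ) (E : Type) [NormedAddCommGroup E] [InnerProductSpace ℂ E]
    [FiniteDimensional ℂ E], Module.finrank ℂ E = n → ∀ f : E →ₗ[ℂ] E,
    ∃ b : OrthonormalBasis (Fin n) ℂ E,
      ∀ i j : Fin n, j < i → LinearMap.toMatrix b.toBasis b.toBasis f i j = 0 := by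
  intro n
  induction n with
  | zero =>
    intro E _ _ _ hn f
    haveI : Subsingleton E := by
      rw [← Module.finrank_zero_iff (R := ℂ)]; omega
    refine ⟨OrthonormalBasis.mk (v := Fin.elim0) ⟨fun i => i.elim0, fun i => i.elim0⟩ ?_, ?_⟩
    · intro x _
      exact Subsingleton.elim x 0 ▸ Submodule.zero_mem _
    · intro i; exact i.elim0
  | succ n ih =>
    intro E _ _ _ hn f
    haveI : Nontrivial E := by
      apply Module.nontrivial_of_finrank_pos (R := ℂ); omega
    obtain ⟨μ, hμ⟩ := Module.End.exists_eigenvalue (K := ℂ) (f := f)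
    obtain ⟨v, hv⟩ := hμ.exists_hasEigenvector
    set u : E := (‖v‖⁻¹ : ℂ) • v with hu_def
    have hu1 : ‖u‖ = 1 := norm_smul_inv_norm hv.2
    have hfu : f u = μ • u := by
      rw [hu_def, map_smul, hv.apply_eq_smul, smul_comm]
    have hune : u ≠ 0 := by
      intro h; rw [h, norm_zero] at hu1; norm_num at hu1
    haveI : Fact (Module.finrank ℂ E = n + 1) := ⟨hn⟩
    set K : Submodule ℂ E := (ℂ ∙ u)ᗮ with hK_def
    have hKrank : Module.finrank ℂ K = n := finrank_orthogonal_span_singleton hune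
    set g : K →ₗ[ℂ] K :=
      (orthogonalProjection K).toLinearMap ∘ₗ f ∘ₗ K.subtype with hg_def
    obtain ⟨c, hc⟩ := ih K hKrank g
    set w : Fin (n+1) → E := Fin.cons u (fun i => (c i : E)) with hw_def
    have hwK : ∀ i : Fin n, (w i.succ : E) ∈ K := by
      intro i; simp [hw_def]
    have hinner_u : ∀ x ∈ K, ⟪u, x⟫_ℂ = 0 := by
      intro x hx
      exact (Submodule.mem_orthogonal _ _).1 hx u (Submodule.mem_span_singleton_self u)
    have hon : Orthonormal ℂ w := by
      constructor
      · intro i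
        refine Fin.cases ?_ (fun i => ?_) i
        · simpa [hw_def] using hu1
        · simp only [hw_def, Fin.cons_succ]; exact c.orthonormal.1 i
      · intro i j
        refine Fin.cases ?_ (fun i' => ?_) i <;> refine Fin.cases ?_ (fun j' => ?_) j <;>
          intro hij
        · exact absurd rfl hij
        · simpa [hw_def] using hinner_u _ (hwK j')
        · rw [inner_eq_zero_symm]
          simpa [hw_def] using hinner_u _ (hwK i')
        · have hne : i' ≠ j' := fun h => hij (by rw [h])
          have := c.orthonormal.2 hne
          simpa [hw_def, Submodule.coe_inner] using this
    have hsp : ⊤ ≤ Submodule.span ℂ (Set.range w) := by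
      rw [← Submodule.sup_orthogonal_of_hasOrthogonalProjection (K := ℂ ∙ u)]
      apply sup_le
      · rw [Submodule.span_singleton_le_iff_mem]
        exact Submodule.subset_span ⟨0, rfl⟩
      · rw [← hK_def]
        intro x hx
        have hcs : Submodule.span ℂ (Set.range ⇑c) = ⊤ := by
          rw [← c.coe_toBasis]; exact c.toBasis.span_eq
        have hx' : (⟨x, hx⟩ : K) ∈ Submodule.span ℂ (Set.range ⇑c) :=
          hcs ▸ Submodule.mem_top
        have hmap := Submodule.mem_map_of_mem (f := K.subtype) hx'
        rw [Submodule.map_span] at hmap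
        refine Submodule.span_mono ?_ hmap
        rintro _ ⟨_, ⟨j', rfl⟩, rfl⟩
        exact ⟨j'.succ, by simp [hw_def]⟩
    refine ⟨OrthonormalBasis.mk hon hsp, ?_⟩
    intro i j hji
    rw [LinearMap.toMatrix_apply, OrthonormalBasis.coe_toBasis,
      OrthonormalBasis.coe_toBasis_repr_apply, OrthonormalBasis.repr_apply_apply]
    simp only [OrthonormalBasis.coe_mk]
    -- goal: ⟪w i, f (w j)⟫ = 0
    have hine : i ≠ 0 := Fin.pos_iff_ne_zero.mp (lt_of_le_of_lt (Fin.zero_le j) hji)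
    obtain ⟨i', rfl⟩ := Fin.exists_succ_eq.mpr hine
    rcases Fin.eq_zero_or_eq_succ j with rfl | ⟨j', rfl⟩
    · have hw0 : w 0 = u := by simp [hw_def]
      rw [hw0, hfu, inner_smul_right]
      have : ⟪w i'.succ, u⟫_ℂ = 0 := by
        rw [inner_eq_zero_symm]
        exact hinner_u _ (hwK i')
      rw [this, mul_zero]
    · have hji' : j' < i' := by
        simpa [Fin.succ_lt_succ_iff] using hji
      have hwsucc : ∀ m : Fin n, w m.succ = (c m : E) := by intro m; simp [hw_def]
      rw [hwsucc, hwsucc]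
      have h1 : ⟪(c i' : E), f (c j') - (orthogonalProjection K (f (c j')) : E)⟫_ℂ = 0 :=
        (Submodule.mem_orthogonal K _).1
          (K.sub_starProjection_mem_orthogonal (f (c j'))) _ (c i').2
      have h2 : ⟪(c i' : E), (orthogonalProjection K (f (c j')) : E)⟫_ℂ = 0 := by
        have hmat := hc i' j' hji'
        rw [LinearMap.toMatrix_apply, OrthonormalBasis.coe_toBasis,
          OrthonormalBasis.coe_toBasis_repr_apply, OrthonormalBasis.repr_apply_apply] at hmat
        rw [← Submodule.coe_inner]
        exact hmat
      have hdecomp : f (c j') = (orthogonalProjection K (f (c j')) : E) +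
          (f (c j') - (orthogonalProjection K (f (c j')) : E)) := by
        rw [add_comm, sub_add_cancel]
      rw [hdecomp, inner_add_right, h1, h2, add_zero]


lemma schur_test {m : ℕ} (M : Matrix (Fin m) (Fin m) ℂ) (r : ℝ) (hr : 0 ≤ r)
    (hrow : ∀ i, ∑ j, ‖M i j‖ ≤ r)
    (hcol : ∀ j, ∑ i, ‖M i j‖ ≤ r) : ‖M‖ ≤ r := by
  rw [Matrix.l2_opNorm_def]
  refine ContinuousLinearMap.opNorm_le_bound _ hr fun x => ?_
  set y : Fin m → ℂ := WithLp.equiv 2 _ x with hy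
  have hMx : Matrix.toEuclideanCLM (𝕜 := ℂ) M x = (WithLp.equiv 2 _).symm (M.mulVec y) := rfl
  have hxx : x = (WithLp.equiv 2 _).symm y := rfl
  calc ‖Matrix.toEuclideanCLM (𝕜 := ℂ) M x‖
      = ‖(WithLp.equiv 2 ((i : Fin m) → ℂ)).symm (M.mulVec y)‖ := by rw [hMx]
    _ ≤ r * ‖(WithLp.equiv 2 ((i : Fin m) → ℂ)).symm y‖ := ?_
    _ = r * ‖x‖ := by rw [← hxx]
  rw [EuclideanSpace.norm_eq, EuclideanSpace.norm_eq]
  have hycoord : ∀ i, ((WithLp.equiv 2 (Fin m → ℂ)).symm y) i = y i := fun i => rfl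
  have key : ∑ i, ‖(M.mulVec y) i‖ ^ 2 ≤ r ^ 2 * ∑ j, ‖y j‖ ^ 2 := by
    have step1 : ∀ i, ‖(M.mulVec y) i‖ ^ 2 ≤
        r * ∑ j, ‖M i j‖ * ‖y j‖ ^ 2 := by
      intro i
      have h1 : ‖(M.mulVec y) i‖ ≤ ∑ j, ‖M i j‖ * ‖y j‖ := by
        have hmv : (M.mulVec y) i = ∑ j, M i j * y j := by
          simp [Matrix.mulVec, dotProduct]
        rw [hmv]
        calc ‖∑ j, M i j * y j‖ ≤ ∑ j, ‖M i j * y j‖ := norm_sum_le _ _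
          _ = ∑ j, ‖M i j‖ * ‖y j‖ := by
              simp [norm_mul]
      have h2 : (∑ j, ‖M i j‖ * ‖y j‖) ^ 2 ≤
          (∑ j, ‖M i j‖) * ∑ j, ‖M i j‖ * ‖y j‖ ^ 2 := by
        have := Finset.sum_mul_sq_le_sq_mul_sq Finset.univ
          (fun j => Real.sqrt (‖M i j‖))
          (fun j => Real.sqrt (‖M i j‖) * ‖y j‖)
        calc (∑ j, ‖M i j‖ * ‖y j‖) ^ 2
            = (∑ j, Real.sqrt (‖M i j‖) *
                (Real.sqrt (‖M i j‖) * ‖y j‖)) ^ 2 := by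
              congr 1; refine Finset.sum_congr rfl fun j _ => ?_
              rw [← mul_assoc, Real.mul_self_sqrt (by positivity)]
          _ ≤ (∑ j, Real.sqrt (‖M i j‖) ^ 2) *
                ∑ j, (Real.sqrt (‖M i j‖) * ‖y j‖) ^ 2 := this
          _ = (∑ j, ‖M i j‖) * ∑ j, ‖M i j‖ * ‖y j‖ ^ 2 := by
              congr 1
              · exact Finset.sum_congr rfl fun j _ => Real.sq_sqrt (by positivity)
              · refine Finset.sum_congr rfl fun j _ => ?_
                rw [mul_pow, Real.sq_sqrt (by positivity)]
      calc ‖(M.mulVec y) i‖ ^ 2 ≤ (∑ j, ‖M i j‖ * ‖y j‖) ^ 2 := by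
            apply pow_le_pow_left₀ (norm_nonneg _) h1
        _ ≤ (∑ j, ‖M i j‖) * ∑ j, ‖M i j‖ * ‖y j‖ ^ 2 := h2
        _ ≤ r * ∑ j, ‖M i j‖ * ‖y j‖ ^ 2 := by
            apply mul_le_mul_of_nonneg_right (hrow i)
            positivity
    calc ∑ i, ‖(M.mulVec y) i‖ ^ 2
        ≤ ∑ i, r * ∑ j, ‖M i j‖ * ‖y j‖ ^ 2 :=
          Finset.sum_le_sum fun i _ => step1 i
      _ = r * ∑ j, (∑ i, ‖M i j‖) * ‖y j‖ ^ 2 := by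
          rw [← Finset.mul_sum, Finset.sum_comm]
          congr 1
          exact Finset.sum_congr rfl fun j _ => by rw [Finset.sum_mul]
      _ ≤ r * ∑ j, r * ‖y j‖ ^ 2 := by
          apply mul_le_mul_of_nonneg_left _ hr
          exact Finset.sum_le_sum fun j _ =>
            mul_le_mul_of_nonneg_right (hcol j) (by positivity)
      _ = r ^ 2 * ∑ j, ‖y j‖ ^ 2 := by rw [← Finset.mul_sum]; ring
  calc Real.sqrt (∑ i, ‖((WithLp.equiv 2 (Fin m → ℂ)).symm (M.mulVec y)) i‖ ^ 2)
      = Real.sqrt (∑ i, ‖(M.mulVec y) i‖ ^ 2) := rfl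
    _ ≤ Real.sqrt (r ^ 2 * ∑ j, ‖y j‖ ^ 2) := Real.sqrt_le_sqrt key
    _ = r * Real.sqrt (∑ j, ‖y j‖ ^ 2) := by
        rw [Real.sqrt_mul (by positivity), Real.sqrt_sq hr]
    _ = r * Real.sqrt (∑ j, ‖((WithLp.equiv 2 (Fin m → ℂ)).symm y) j‖ ^ 2) := rfl


lemma diag_norm_le {m : ℕ} (d : Fin m → ℂ) (r : ℝ) (hr : 0 ≤ r)
    (h : ∀ i, ‖d i‖ ≤ r) : ‖Matrix.diagonal d‖ ≤ r := by
  refine schur_test _ r hr (fun i => ?_) (fun j => ?_)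
  · calc ∑ j, ‖Matrix.diagonal d i j‖
        = ∑ j, if i = j then ‖d i‖ else 0 := by
          refine Finset.sum_congr rfl fun j _ => ?_
          by_cases hij : i = j <;> simp [Matrix.diagonal_apply, hij]
      _ = ‖d i‖ := by rw [Finset.sum_ite_eq Finset.univ i fun _ => ‖d i‖]; simp
      _ ≤ r := h i
  · calc ∑ i, ‖Matrix.diagonal d i j‖
        = ∑ i, if i = j then ‖d j‖ else 0 := by
          refine Finset.sum_congr rfl fun i _ => ?_
          by_cases hij : i = j <;> simp [Matrix.diagonal_apply, hij]
      _ = ‖d j‖ := by rw [Finset.sum_ite_eq' Finset.univ j fun _ => ‖d j‖]; simp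
      _ ≤ r := h j

lemma entry_le_norm {m : ℕ} (M : Matrix (Fin m) (Fin m) ℂ) (i j : Fin m) :
    ‖M i j‖ ≤ ‖M‖ := by
  have hx := Matrix.l2_opNorm_mulVec M (EuclideanSpace.single j (1 : ℂ))
  rw [EuclideanSpace.norm_single, norm_one, mul_one] at hx
  refine le_trans ?_ hx
  set z := (EuclideanSpace.equiv (Fin m) ℂ).symm (M.mulVec (EuclideanSpace.single j (1 : ℂ)))
  have hz : z i = M i j := by
    show (M.mulVec (EuclideanSpace.single j (1 : ℂ) : Fin m → ℂ)) i = M i j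
    have : (EuclideanSpace.single j (1 : ℂ) : Fin m → ℂ) = Pi.single j 1 := rfl
    rw [this, Matrix.mulVec_single]; simp
  have : ‖M i j‖ = ‖z i‖ := by rw [hz]
  rw [this, EuclideanSpace.norm_eq]
  have h1 : ‖z i‖ = Real.sqrt (‖z i‖ ^ 2) := by
    rw [Real.sqrt_sq (norm_nonneg _)]
  rw [h1]
  apply Real.sqrt_le_sqrt
  exact Finset.single_le_sum (f := fun k => ‖z k‖ ^ 2) (fun k _ => by positivity)
    (Finset.mem_univ i)

lemma geom_bound {δ : ℝ} (h0 : 0 ≤ δ) (h1 : δ < 1) (m : ℕ) :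
    ∑ d ∈ Finset.range m, δ ^ d ≤ (1 - δ)⁻¹ := by
  have hpos : 0 < 1 - δ := by linarith
  have hmul := geom_sum_mul δ m
  have hle : (∑ d ∈ Finset.range m, δ ^ d) * (1 - δ) ≤ 1 := by
    nlinarith [pow_nonneg h0 m]
  rw [inv_eq_one_div]
  exact (le_div_iff₀ hpos).mpr hle

lemma myConj_pow {R : Type*} [Monoid R] (u v t : R) (huv : u * v = 1) (hvu : v * u = 1)
    (k : ℕ) : (u * t * v) ^ k = u * t ^ k * v := by
  induction k with
  | zero => simp [huv]
  | succ k ih =>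
    rw [pow_succ, ih, pow_succ]
    calc u * t ^ k * v * (u * t * v) = u * t ^ k * (v * u) * t * v := by
          simp only [mul_assoc]
      _ = u * (t ^ k * t) * v := by rw [hvu]; simp only [mul_assoc, one_mul]

lemma l2_norm_one {m : ℕ} (hm : 0 < m) : ‖(1 : Matrix (Fin m) (Fin m) ℂ)‖ = 1 := by
  haveI : Nonempty (Fin m) := ⟨⟨0, hm⟩⟩
  haveI : Nontrivial (EuclideanSpace ℂ (Fin m)) := by
    refine ⟨EuclideanSpace.single ⟨0, hm⟩ (1 : ℂ), 0, fun h => ?_⟩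
    have := congrArg norm h
    rw [EuclideanSpace.norm_single, norm_one, norm_zero] at this
    norm_num at this
  have h1 : Matrix.toEuclideanCLM (𝕜 := ℂ) (1 : Matrix (Fin m) (Fin m) ℂ) = 1 := map_one _
  rw [Matrix.cstar_norm_def, h1]
  exact ContinuousLinearMap.norm_id

lemma row_sum_le {n : ℕ} {δ : ℝ} (h0 : 0 ≤ δ) (h1 : δ < 1) (i : Fin n) :
    ∑ j : Fin n, (if i < j then δ ^ ((j : ℕ) - (i : ℕ)) else 0) ≤ δ * (1 - δ)⁻¹ := by
  set F : ℕ → ℝ := fun m => if (i : ℕ) < m then δ ^ (m - (i : ℕ)) else 0 with hF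
  have hFnn : ∀ m, 0 ≤ F m := by
    intro m; rw [hF]; dsimp only; split
    · positivity
    · exact le_refl 0
  have h₁ : ∑ j : Fin n, (if i < j then δ ^ ((j : ℕ) - (i : ℕ)) else 0) =
      ∑ m ∈ Finset.range n, F m := by
    rw [← Fin.sum_univ_eq_sum_range]
    exact Finset.sum_congr rfl fun j _ => by rw [hF]; simp only [Fin.lt_def]
  have h₂ : ∑ m ∈ Finset.range n, F m ≤ ∑ m ∈ Finset.range ((i : ℕ) + 1 + n), F m :=
    Finset.sum_le_sum_of_subset_of_nonneg
      (Finset.range_subset_range.mpr (by omega)) (fun m _ _ => hFnn m)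
  have h₃ : ∑ m ∈ Finset.range ((i : ℕ) + 1 + n), F m =
      ∑ m ∈ Finset.Ico ((i : ℕ) + 1) ((i : ℕ) + 1 + n), F m := by
    rw [Finset.range_eq_Ico, ← Finset.sum_Ico_consecutive F (Nat.zero_le ((i : ℕ) + 1)) (by omega)]
    have : ∑ m ∈ Finset.Ico 0 ((i : ℕ) + 1), F m = 0 := by
      apply Finset.sum_eq_zero
      intro m hm
      rw [Finset.mem_Ico] at hm
      rw [hF]; dsimp only
      rw [if_neg (by omega)]
    rw [this, zero_add]
  have h₄ : ∑ m ∈ Finset.Ico ((i : ℕ) + 1) ((i : ℕ) + 1 + n), F m =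
      ∑ d ∈ Finset.range n, δ ^ (d + 1) := by
    rw [Finset.sum_Ico_eq_sum_range]
    have hn' : (i : ℕ) + 1 + n - ((i : ℕ) + 1) = n := by omega
    rw [hn']
    refine Finset.sum_congr rfl fun d _ => ?_
    rw [hF]; dsimp only
    rw [if_pos (by omega)]
    congr 1
    omega
  have h₅ : ∑ d ∈ Finset.range n, δ ^ (d + 1) ≤ δ * (1 - δ)⁻¹ := by
    have : ∑ d ∈ Finset.range n, δ ^ (d + 1) = δ * ∑ d ∈ Finset.range n, δ ^ d := by
      rw [Finset.mul_sum]
      exact Finset.sum_congr rfl fun d _ => by rw [pow_succ, mul_comm]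
    rw [this]
    exact mul_le_mul_of_nonneg_left (geom_bound h0 h1 n) h0
  rw [h₁]
  exact le_trans h₂ (le_trans (le_of_eq h₃) (le_trans (le_of_eq h₄) h₅))

lemma col_sum_le {n : ℕ} {δ : ℝ} (h0 : 0 ≤ δ) (h1 : δ < 1) (j : Fin n) :
    ∑ i : Fin n, (if i < j then δ ^ ((j : ℕ) - (i : ℕ)) else 0) ≤ δ * (1 - δ)⁻¹ := by
  set F : ℕ → ℝ := fun m => if m < (j : ℕ) then δ ^ ((j : ℕ) - m) else 0 with hF
  have h₁ : ∑ i : Fin n, (if i < j then δ ^ ((j : ℕ) - (i : ℕ)) else 0) =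
      ∑ m ∈ Finset.range n, F m := by
    rw [← Fin.sum_univ_eq_sum_range]
    exact Finset.sum_congr rfl fun i _ => by rw [hF]; simp only [Fin.lt_def]
  have h₂ : ∑ m ∈ Finset.range n, F m = ∑ m ∈ Finset.range (j : ℕ), F m := by
    rw [Finset.range_eq_Ico,
      ← Finset.sum_Ico_consecutive F (Nat.zero_le (j : ℕ)) (le_of_lt j.2)]
    have : ∑ m ∈ Finset.Ico (j : ℕ) n, F m = 0 := by
      apply Finset.sum_eq_zero
      intro m hm
      rw [Finset.mem_Ico] at hm
      rw [hF]; dsimp only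
      rw [if_neg (by omega)]
    rw [this, add_zero, ← Finset.range_eq_Ico]
  have h₃ : ∑ m ∈ Finset.range (j : ℕ), F m = ∑ d ∈ Finset.range (j : ℕ), δ ^ (d + 1) := by
    have := Finset.sum_range_reflect (fun d => δ ^ (d + 1)) (j : ℕ)
    rw [← this]
    refine Finset.sum_congr rfl fun m hm => ?_
    rw [Finset.mem_range] at hm
    rw [hF]; dsimp only
    rw [if_pos hm]
    congr 1
    omega
  have h₅ : ∑ d ∈ Finset.range (j : ℕ), δ ^ (d + 1) ≤ δ * (1 - δ)⁻¹ := by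
    have : ∑ d ∈ Finset.range (j : ℕ), δ ^ (d + 1) = δ * ∑ d ∈ Finset.range (j : ℕ), δ ^ d := by
      rw [Finset.mul_sum]
      exact Finset.sum_congr rfl fun d _ => by rw [pow_succ, mul_comm]
    rw [this]
    exact mul_le_mul_of_nonneg_left (geom_bound h0 h1 _) h0
  rw [h₁, h₂, h₃]
  exact h₅

lemma opNorm_eq {n : ℕ} (A : Matrix (Fin n) (Fin n) ℂ) : opNorm A = ‖A‖ :=
  (Matrix.cstar_norm_def A).symm

lemma norm_mul3_le {n : ℕ} (X Y Z : Matrix (Fin n) (Fin n) ℂ) :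
    ‖X * Y * Z‖ ≤ ‖X‖ * ‖Y‖ * ‖Z‖ :=
  le_trans (Matrix.l2_opNorm_mul _ _)
    (mul_le_mul_of_nonneg_right (Matrix.l2_opNorm_mul _ _) (norm_nonneg _))

set_option maxHeartbeats 1000000 in
/-- For any complex `n × n` matrix `A`, any `ε > 0` and any `k`,
`‖A^k‖ ≤ √n (1 + 2/ε)^(n-1) (ρ(A) + ε ‖A‖)^k`. -/
theorem opNorm_pow_le {n : ℕ} (A : Matrix (Fin n) (Fin n) ℂ) (ε : ℝ) (hε : 0 < ε) (k : ℕ) :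
    opNorm (A ^ k) ≤
      Real.sqrt n * (1 + 2 / ε) ^ (n - 1) * (specRad A + ε * opNorm A) ^ k := by
  rcases Nat.eq_zero_or_pos n with rfl | hn
  · -- n = 0
    have h0 : Matrix.toEuclideanCLM (𝕜 := ℂ) (A ^ k) = 0 := Subsingleton.elim _ _
    rw [opNorm, h0, norm_zero]
    simp
  -- n ≥ 1
  -- Schur triangularization
  set b₀ : OrthonormalBasis (Fin n) ℂ (EuclideanSpace ℂ (Fin n)) :=
    EuclideanSpace.basisFun (Fin n) ℂ with hb₀
  set f : EuclideanSpace ℂ (Fin n) →ₗ[ℂ] EuclideanSpace ℂ (Fin n) :=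
    Matrix.toLin b₀.toBasis b₀.toBasis A with hf
  obtain ⟨b, hb⟩ := schur_exists n _ finrank_euclideanSpace_fin f
  set T : Matrix (Fin n) (Fin n) ℂ := LinearMap.toMatrix b.toBasis b.toBasis f with hT
  set U : Matrix (Fin n) (Fin n) ℂ := b₀.toBasis.toMatrix b.toBasis with hU
  set W : Matrix (Fin n) (Fin n) ℂ := b.toBasis.toMatrix b₀.toBasis with hW
  have hUW : U * W = 1 := Module.Basis.toMatrix_mul_toMatrix_flip _ _
  have hWU : W * U = 1 := Module.Basis.toMatrix_mul_toMatrix_flip _ _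
  have hA : U * T * W = A := by
    rw [hU, hT, hW, basis_toMatrix_mul_linearMap_toMatrix_mul_basis_toMatrix,
      hf, LinearMap.toMatrix_toLin]
  have hUmem : U ∈ Matrix.unitaryGroup (Fin n) ℂ :=
    b₀.toMatrix_orthonormalBasis_mem_unitary b
  have hUstar : U * star U = 1 := Matrix.mem_unitaryGroup_iff.mp hUmem
  have hWstar : W = star U := by
    calc W = W * (U * star U) := by rw [hUstar, mul_one]
      _ = star U := by rw [← mul_assoc, hWU, one_mul]
  have hnormU : ‖U‖ = 1 := by
    have h := Matrix.l2_opNorm_conjTranspose_mul_self U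
    have h2 : Uᴴ * U = 1 := by
      rw [← Matrix.star_eq_conjTranspose]
      exact Matrix.mem_unitaryGroup_iff'.mp hUmem
    rw [h2, l2_norm_one hn] at h
    nlinarith [norm_nonneg U]
  have hnormW : ‖W‖ = 1 := by
    rw [hWstar, Matrix.star_eq_conjTranspose, Matrix.l2_opNorm_conjTranspose]
    exact hnormU
  have hTA : ‖T‖ ≤ ‖A‖ := by
    have hTeq : W * A * U = T := by
      rw [← hA]
      calc W * (U * T * W) * U = (W * U) * T * (W * U) := by
            simp only [mul_assoc]
        _ = T := by rw [hWU, one_mul, mul_one]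
    calc ‖T‖ = ‖W * A * U‖ := by rw [hTeq]
      _ ≤ ‖W‖ * ‖A‖ * ‖U‖ := norm_mul3_le _ _ _
      _ = ‖A‖ := by rw [hnormU, hnormW, one_mul, mul_one]
  have hTentry : ∀ i j, ‖T i j‖ ≤ ‖A‖ :=
    fun i j => le_trans (entry_le_norm T i j) hTA
  -- diagonal entries are in the spectrum
  have hspec : ∀ i, T i i ∈ spectrum ℂ A := by
    intro i
    rw [spectrum.mem_iff]
    intro hunit
    -- transfer to T
    have halg : ∀ (c : ℂ), W * (algebraMap ℂ (Matrix (Fin n) (Fin n) ℂ) c - A) * U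
        = algebraMap ℂ _ c - T := by
      intro c
      rw [mul_sub, sub_mul]
      congr 1
      · rw [Algebra.algebraMap_eq_smul_one, Matrix.mul_smul, mul_one, Matrix.smul_mul, hWU]
      · rw [← hA]
        calc W * (U * T * W) * U = (W * U) * T * (W * U) := by simp only [mul_assoc]
          _ = T := by rw [hWU, one_mul, mul_one]
    have hunit2 : IsUnit (algebraMap ℂ (Matrix (Fin n) (Fin n) ℂ) (T i i) - T) := by
      rw [← halg (T i i)]
      have wUnit : IsUnit W := ⟨⟨W, U, by exact hWU, by exact hUW⟩, rfl⟩
      have uUnit : IsUnit U := ⟨⟨U, W, by exact hUW, by exact hWU⟩, rfl⟩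
      exact (wUnit.mul hunit).mul uUnit
    -- but the determinant vanishes
    have htri : ((algebraMap ℂ (Matrix (Fin n) (Fin n) ℂ) (T i i) - T)).BlockTriangular id := by
      intro p q hpq
      simp only [Matrix.sub_apply, Matrix.algebraMap_matrix_apply]
      rw [if_neg (by exact fun h => absurd h (ne_of_gt hpq)), hb p q hpq, sub_zero]
    have hdet := Matrix.det_of_upperTriangular htri
    have hdet0 : (algebraMap ℂ (Matrix (Fin n) (Fin n) ℂ) (T i i) - T).det = 0 := by
      rw [hdet]
      refine Finset.prod_eq_zero (Finset.mem_univ i) ?_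
      simp [Matrix.algebraMap_matrix_apply]
    rw [Matrix.isUnit_iff_isUnit_det, hdet0] at hunit2
    exact (not_isUnit_zero : ¬ IsUnit (0 : ℂ)) hunit2
  have hbdd : BddAbove ((fun z : ℂ => ‖z‖) '' spectrum ℂ A) :=
    ((spectrum.isCompact A).image continuous_norm).bddAbove
  have hρle : ∀ i, ‖T i i‖ ≤ specRad A := fun i =>
    le_csSup hbdd (Set.mem_image_of_mem _ (hspec i))
  have hρ0 : 0 ≤ specRad A := by
    have i0 : Fin n := ⟨0, hn⟩
    exact le_trans (norm_nonneg _) (hρle i0)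
  -- scaling
  set δ : ℝ := ε / (1 + ε) with hδ
  have hδ0 : 0 < δ := div_pos hε (by linarith)
  have hδ1 : δ < 1 := by
    rw [hδ, div_lt_one (by linarith)]; linarith
  have hδgeom : δ * (1 - δ)⁻¹ = ε := by
    rw [hδ]; field_simp; ring
  have hδC : (0 : ℂ) ≠ ((δ : ℂ)) := by
    simp only [ne_eq]
    exact fun h => absurd (Complex.ofReal_eq_zero.mp h.symm) (ne_of_gt hδ0)
  set S : Matrix (Fin n) (Fin n) ℂ := Matrix.diagonal (fun i => ((δ : ℂ) ^ (i : ℕ))⁻¹) with hS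
  set Sinv : Matrix (Fin n) (Fin n) ℂ := Matrix.diagonal (fun i => (δ : ℂ) ^ (i : ℕ)) with hSinv
  have hpowne : ∀ i : Fin n, ((δ : ℂ) ^ (i : ℕ)) ≠ 0 :=
    fun i => pow_ne_zero _ (fun h => hδC h.symm)
  have hSS : S * Sinv = 1 := by
    rw [hS, hSinv, Matrix.diagonal_mul_diagonal]
    rw [show (fun i : Fin n => ((δ : ℂ) ^ (i : ℕ))⁻¹ * (δ : ℂ) ^ (i : ℕ)) = fun _ => 1 from
      funext fun i => inv_mul_cancel₀ (hpowne i), Matrix.diagonal_one]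
  have hSinvS : Sinv * S = 1 := by
    rw [hSinv, hS, Matrix.diagonal_mul_diagonal]
    rw [show (fun i : Fin n => (δ : ℂ) ^ (i : ℕ) * ((δ : ℂ) ^ (i : ℕ))⁻¹) = fun _ => 1 from
      funext fun i => mul_inv_cancel₀ (hpowne i), Matrix.diagonal_one]
  set B : Matrix (Fin n) (Fin n) ℂ := S * T * Sinv with hB
  have hTeq2 : T = Sinv * B * S := by
    rw [hB]
    calc T = (Sinv * S) * T * (Sinv * S) := by rw [hSinvS, one_mul, mul_one]
      _ = Sinv * (S * T * Sinv) * S := by simp only [mul_assoc]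
  set r : ℝ := specRad A + ε * ‖A‖ with hr
  have hr0 : 0 ≤ r := by
    have := norm_nonneg A
    exact add_nonneg hρ0 (mul_nonneg hε.le this)
  -- entrywise bound on B
  have hBentry : ∀ i j, ‖B i j‖ ≤
      (if i = j then specRad A else 0) +
        ‖A‖ * (if i < j then δ ^ ((j : ℕ) - (i : ℕ)) else 0) := by
    intro i j
    have hBij : B i j = ((δ : ℂ) ^ (i : ℕ))⁻¹ * T i j * (δ : ℂ) ^ (j : ℕ) := by
      rw [hB, hS, hSinv, Matrix.mul_diagonal, Matrix.diagonal_mul]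
    have habs : ‖B i j‖ = (δ ^ (i : ℕ))⁻¹ * ‖T i j‖ * δ ^ (j : ℕ) := by
      rw [hBij, norm_mul, norm_mul, norm_inv, norm_pow, norm_pow, Complex.norm_real, Real.norm_eq_abs,
        abs_of_pos hδ0]
    rcases lt_trichotomy i j with hij | hij | hij
    · rw [if_neg (ne_of_lt hij), if_pos hij, zero_add, habs]
      have hexp : (δ ^ (i : ℕ))⁻¹ * δ ^ (j : ℕ) = δ ^ ((j : ℕ) - (i : ℕ)) := by
        rw [inv_mul_eq_div, eq_comm, eq_div_iff (by positivity), ← pow_add]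
        congr 1
        have : (i : ℕ) < (j : ℕ) := hij
        omega
      calc (δ ^ (i : ℕ))⁻¹ * ‖T i j‖ * δ ^ (j : ℕ)
          = ‖T i j‖ * ((δ ^ (i : ℕ))⁻¹ * δ ^ (j : ℕ)) := by ring
        _ = ‖T i j‖ * δ ^ ((j : ℕ) - (i : ℕ)) := by rw [hexp]
        _ ≤ ‖A‖ * δ ^ ((j : ℕ) - (i : ℕ)) := by
            apply mul_le_mul_of_nonneg_right (hTentry i j) (by positivity)
    · subst hij
      rw [if_pos rfl, if_neg (lt_irrefl _), mul_zero, add_zero, habs]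
      calc (δ ^ (i : ℕ))⁻¹ * ‖T i i‖ * δ ^ (i : ℕ)
          = ‖T i i‖ * ((δ ^ (i : ℕ))⁻¹ * δ ^ (i : ℕ)) := by ring
        _ = ‖T i i‖ := by
            rw [inv_mul_cancel₀ (by positivity), mul_one]
        _ ≤ specRad A := hρle i
    · rw [if_neg (ne_of_gt hij), if_neg (not_lt_of_gt hij), mul_zero, add_zero]
      rw [hBij, hb i j hij, mul_zero, zero_mul, norm_zero]
  have hrowB : ∀ i, ∑ j, ‖B i j‖ ≤ r := by
    intro i
    calc ∑ j, ‖B i j‖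
        ≤ ∑ j, ((if i = j then specRad A else 0) +
            ‖A‖ * (if i < j then δ ^ ((j : ℕ) - (i : ℕ)) else 0)) :=
          Finset.sum_le_sum fun j _ => hBentry i j
      _ = specRad A + ‖A‖ * ∑ j, (if i < j then δ ^ ((j : ℕ) - (i : ℕ)) else 0) := by
          rw [Finset.sum_add_distrib, ← Finset.mul_sum]
          congr 1
          rw [Finset.sum_ite_eq Finset.univ i fun _ => specRad A]
          simp
      _ ≤ specRad A + ‖A‖ * (δ * (1 - δ)⁻¹) := by
          have := row_sum_le hδ0.le hδ1 i
          exact add_le_add_right (mul_le_mul_of_nonneg_left this (norm_nonneg A)) _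
      _ = r := by rw [hδgeom, hr]; ring
  have hcolB : ∀ j, ∑ i, ‖B i j‖ ≤ r := by
    intro j
    calc ∑ i, ‖B i j‖
        ≤ ∑ i, ((if i = j then specRad A else 0) +
            ‖A‖ * (if i < j then δ ^ ((j : ℕ) - (i : ℕ)) else 0)) :=
          Finset.sum_le_sum fun i _ => hBentry i j
      _ = specRad A + ‖A‖ * ∑ i, (if i < j then δ ^ ((j : ℕ) - (i : ℕ)) else 0) := by
          rw [Finset.sum_add_distrib, ← Finset.mul_sum]
          congr 1
          rw [Finset.sum_ite_eq' Finset.univ j fun _ => specRad A]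
          simp
      _ ≤ specRad A + ‖A‖ * (δ * (1 - δ)⁻¹) := by
          have := col_sum_le hδ0.le hδ1 j
          exact add_le_add_right (mul_le_mul_of_nonneg_left this (norm_nonneg A)) _
      _ = r := by rw [hδgeom, hr]; ring
  have hnormB : ‖B‖ ≤ r := schur_test B r hr0 hrowB hcolB
  have hnormS : ‖S‖ ≤ (δ ^ (n - 1))⁻¹ := by
    refine diag_norm_le _ _ (by positivity) fun i => ?_
    rw [norm_inv, norm_pow, Complex.norm_real, Real.norm_eq_abs, abs_of_pos hδ0]
    refine inv_anti₀ (by positivity) ?_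
    exact pow_le_pow_of_le_one hδ0.le hδ1.le (by omega)
  have hnormSinv : ‖Sinv‖ ≤ 1 := by
    refine diag_norm_le _ _ zero_le_one fun i => ?_
    rw [norm_pow, Complex.norm_real, Real.norm_eq_abs, abs_of_pos hδ0]
    exact pow_le_one₀ hδ0.le hδ1.le
  have hnormBk : ‖B ^ k‖ ≤ r ^ k := by
    rcases Nat.eq_zero_or_pos k with rfl | hk
    · rw [pow_zero, pow_zero, l2_norm_one hn]
    · exact le_trans (norm_pow_le' B hk) (pow_le_pow_left₀ (norm_nonneg B) hnormB k)
  have hAk : A ^ k = U * T ^ k * W := by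
    rw [← hA]; exact myConj_pow U W T hUW hWU k
  have hTk : T ^ k = Sinv * B ^ k * S := by
    rw [hTeq2]; exact myConj_pow Sinv S B hSinvS hSS k
  have hmain : ‖A ^ k‖ ≤ r ^ k * (δ ^ (n - 1))⁻¹ := by
    calc ‖A ^ k‖ = ‖U * T ^ k * W‖ := by rw [hAk]
      _ ≤ ‖U‖ * ‖T ^ k‖ * ‖W‖ := norm_mul3_le _ _ _
      _ = ‖T ^ k‖ := by rw [hnormU, hnormW, one_mul, mul_one]
      _ = ‖Sinv * B ^ k * S‖ := by rw [hTk]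
      _ ≤ ‖Sinv‖ * ‖B ^ k‖ * ‖S‖ := norm_mul3_le _ _ _
      _ ≤ 1 * r ^ k * (δ ^ (n - 1))⁻¹ := by
          have h1 : ‖Sinv‖ * ‖B ^ k‖ ≤ 1 * r ^ k :=
            mul_le_mul hnormSinv hnormBk (norm_nonneg _) zero_le_one
          exact mul_le_mul h1 hnormS (norm_nonneg _) (by rw [one_mul]; exact pow_nonneg hr0 k)
      _ = r ^ k * (δ ^ (n - 1))⁻¹ := by rw [one_mul]
  have hδinv : (δ ^ (n - 1))⁻¹ ≤ (1 + 2 / ε) ^ (n - 1) := by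
    rw [← inv_pow]
    apply pow_le_pow_left₀ (by positivity)
    rw [hδ, inv_div, div_le_iff₀ hε, add_mul, div_mul_cancel₀ _ (ne_of_gt hε), one_mul]
    linarith
  have hsqrt : (1 : ℝ) ≤ Real.sqrt n := by
    rw [Real.one_le_sqrt]
    · exact_mod_cast hn
  rw [opNorm_eq, opNorm_eq, ← hr]
  calc ‖A ^ k‖ ≤ r ^ k * (δ ^ (n - 1))⁻¹ := hmain
    _ ≤ r ^ k * (1 + 2 / ε) ^ (n - 1) := by
        apply mul_le_mul_of_nonneg_left hδinv (pow_nonneg hr0 k)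
    _ ≤ Real.sqrt n * (1 + 2 / ε) ^ (n - 1) * r ^ k := by
        calc r ^ k * (1 + 2 / ε) ^ (n - 1)
            = 1 * ((1 + 2 / ε) ^ (n - 1) * r ^ k) := by ring
          _ ≤ Real.sqrt n * ((1 + 2 / ε) ^ (n - 1) * r ^ k) := by
              apply mul_le_mul_of_nonneg_right hsqrt (mul_nonneg (by positivity) (pow_nonneg hr0 k))
          _ = Real.sqrt n * (1 + 2 / ε) ^ (n - 1) * r ^ k := by ring
end

section
/- Let h(X) = A X Aᵀ + Q and g(X) = A X Aᵀ + Q − A X Cᵀ (C X Cᵀ + R)^{-1} C X Aᵀ with R positive definite and Q positive semidefinite. For any positive semidefinite matrices X ≥ Y ≥ 0 (in the Loewner order), one has h(X) ≥ h(Y), g(X) ≥ g(Y), and h(X) ≥ g(X). -/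
open Matrix

private lemma riccati_step1 {n m : ℕ} (A : Matrix (Fin n) (Fin n) ℝ)
    (C : Matrix (Fin m) (Fin n) ℝ) (Q : Matrix (Fin n) (Fin n) ℝ)
    (S : Matrix (Fin m) (Fin m) ℝ)
    (W : Matrix (Fin n) (Fin n) ℝ) (K : Matrix (Fin n) (Fin m) ℝ) :
    (A - K * C) * W * (A - K * C)ᵀ + K * (S - C * W * Cᵀ) * Kᵀ + Q
      = A * W * Aᵀ + Q - K * (C * W * Aᵀ) - (A * W * Cᵀ) * Kᵀ + K * S * Kᵀ := by
  simp only [transpose_sub, transpose_mul, transpose_transpose,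
    Matrix.sub_mul, Matrix.mul_sub, Matrix.mul_add, Matrix.add_mul, Matrix.mul_assoc]
  abel

private lemma riccati_step2 {n m : ℕ} (S : Matrix (Fin m) (Fin m) ℝ)
    (K P : Matrix (Fin n) (Fin m) ℝ)
    (hSt : (S⁻¹)ᵀ = S⁻¹) (hinv : IsUnit S.det) :
    (K - P * S⁻¹) * S * (K - P * S⁻¹)ᵀ
      = K * S * Kᵀ - K * Pᵀ - P * Kᵀ + P * S⁻¹ * Pᵀ := by
  have h1 : ∀ M : Matrix (Fin m) (Fin n) ℝ, S * (S⁻¹ * M) = M := fun M => by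
    rw [← Matrix.mul_assoc, Matrix.mul_nonsing_inv _ hinv, Matrix.one_mul]
  have h2 : ∀ M : Matrix (Fin m) (Fin n) ℝ, S⁻¹ * (S * M) = M := fun M => by
    rw [← Matrix.mul_assoc, Matrix.nonsing_inv_mul _ hinv, Matrix.one_mul]
  simp only [transpose_sub, transpose_mul, hSt, Matrix.sub_mul, Matrix.mul_sub,
    Matrix.mul_assoc, h1, h2]
  abel

private lemma riccati_key {n m : ℕ} (A : Matrix (Fin n) (Fin n) ℝ)
    (C : Matrix (Fin m) (Fin n) ℝ) (Q : Matrix (Fin n) (Fin n) ℝ)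
    (R : Matrix (Fin m) (Fin m) ℝ)
    (W : Matrix (Fin n) (Fin n) ℝ) (K : Matrix (Fin n) (Fin m) ℝ)
    (hW : Wᵀ = W) (hRt : Rᵀ = R)
    (hinv : IsUnit (C * W * Cᵀ + R).det) :
    (A - K * C) * W * (A - K * C)ᵀ + K * R * Kᵀ + Q
      = (A * W * Aᵀ + Q - A * W * Cᵀ * (C * W * Cᵀ + R)⁻¹ * C * W * Aᵀ)
        + (K - A * W * Cᵀ * (C * W * Cᵀ + R)⁻¹) * (C * W * Cᵀ + R)
          * (K - A * W * Cᵀ * (C * W * Cᵀ + R)⁻¹)ᵀ := by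
  have hSt : (C * W * Cᵀ + R)ᵀ = C * W * Cᵀ + R := by
    simp [transpose_add, transpose_mul, transpose_transpose, hW, hRt, Matrix.mul_assoc]
  have hSinvT : ((C * W * Cᵀ + R)⁻¹)ᵀ = (C * W * Cᵀ + R)⁻¹ := by
    rw [Matrix.transpose_nonsing_inv, hSt]
  have hR' : R = (C * W * Cᵀ + R) - C * W * Cᵀ := by abel
  conv_lhs => rw [hR']
  rw [riccati_step1 A C Q (C * W * Cᵀ + R) W K,
    riccati_step2 (C * W * Cᵀ + R) K (A * W * Cᵀ) hSinvT hinv]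
  simp only [transpose_mul, transpose_transpose, hW, Matrix.mul_assoc]
  abel

/-- Monotonicity of the Riccati-type operators `h(X) = A X Aᵀ + Q` and
`g(X) = A X Aᵀ + Q − A X Cᵀ (C X Cᵀ + R)⁻¹ C X Aᵀ` with respect to the
Loewner order, and `h(X) ≥ g(X)`. -/
theorem h_g_monotone {n m : ℕ} (A : Matrix (Fin n) (Fin n) ℝ)
    (C : Matrix (Fin m) (Fin n) ℝ) (Q : Matrix (Fin n) (Fin n) ℝ)
    (R : Matrix (Fin m) (Fin m) ℝ) (hQ : Q.PosSemidef) (hR : R.PosDef)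
    (h : Matrix (Fin n) (Fin n) ℝ → Matrix (Fin n) (Fin n) ℝ)
    (g : Matrix (Fin n) (Fin n) ℝ → Matrix (Fin n) (Fin n) ℝ)
    (hh : ∀ X, h X = A * X * Aᵀ + Q)
    (hg : ∀ X, g X = A * X * Aᵀ + Q - A * X * Cᵀ * (C * X * Cᵀ + R)⁻¹ * C * X * Aᵀ)
    (X Y : Matrix (Fin n) (Fin n) ℝ) (hY : Y.PosSemidef) (hXY : (X - Y).PosSemidef) :
    (h X - h Y).PosSemidef ∧ (g X - g Y).PosSemidef ∧ (h X - g X).PosSemidef := by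
  have conj : ∀ {k l : ℕ} (M : Matrix (Fin k) (Fin k) ℝ) (B : Matrix (Fin l) (Fin k) ℝ),
      M.PosSemidef → (B * M * Bᵀ).PosSemidef := fun M B hM => by
    simpa using hM.mul_mul_conjTranspose_same B
  have hX : X.PosSemidef := by
    have := hXY.add hY
    rwa [sub_add_cancel] at this
  have hXs : Xᵀ = X := (by simpa using hX.1 : X.IsSymm)
  have hYs : Yᵀ = Y := (by simpa using hY.1 : Y.IsSymm)
  have hRt : Rᵀ = R := (by simpa using hR.1 : R.IsSymm)
  have hS : (C * X * Cᵀ + R).PosDef := Matrix.PosDef.posSemidef_add (conj X C hX) hR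
  have hT : (C * Y * Cᵀ + R).PosDef := Matrix.PosDef.posSemidef_add (conj Y C hY) hR
  have hSdet : IsUnit (C * X * Cᵀ + R).det := isUnit_iff_ne_zero.mpr hS.det_pos.ne'
  have hTdet : IsUnit (C * Y * Cᵀ + R).det := isUnit_iff_ne_zero.mpr hT.det_pos.ne'
  set K := A * X * Cᵀ * (C * X * Cᵀ + R)⁻¹ with hK
  set L := A * Y * Cᵀ * (C * Y * Cᵀ + R)⁻¹ with hL
  set F := A - K * C with hF
  have e1 : g X = F * X * Fᵀ + K * R * Kᵀ + Q := by
    rw [riccati_key A C Q R X K hXs hRt hSdet, ← hK, sub_self, Matrix.zero_mul,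
      Matrix.zero_mul, add_zero, hg]
  have e2 : F * Y * Fᵀ + K * R * Kᵀ + Q
      = g Y + (K - L) * (C * Y * Cᵀ + R) * (K - L)ᵀ := by
    rw [riccati_key A C Q R Y K hYs hRt hTdet, ← hL, hg]
  refine ⟨?_, ?_, ?_⟩
  · have : h X - h Y = A * (X - Y) * Aᵀ := by rw [hh, hh]; noncomm_ring
    rw [this]; exact conj _ A hXY
  · have e3 : g X - g Y = F * (X - Y) * Fᵀ + (K - L) * (C * Y * Cᵀ + R) * (K - L)ᵀ := by
      rw [e1, eq_sub_of_add_eq e2.symm]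
      noncomm_ring
    rw [e3]
    exact (conj _ F hXY).add (conj _ (K - L) hT.posSemidef)
  · have : h X - g X = (A * X * Cᵀ) * (C * X * Cᵀ + R)⁻¹ * (A * X * Cᵀ)ᵀ := by
      rw [hh, hg]
      simp [transpose_mul, transpose_transpose, hXs, Matrix.mul_assoc]
    rw [this]
    exact conj _ (A * X * Cᵀ) hS.inv.posSemidef
end

section
/- Let g(X) = A X Aᵀ + Q − A X Cᵀ (C X Cᵀ + R)^{-1} C X Aᵀ and φ(K, X) = (A + KC) X (A + KC)ᵀ + Q + K R Kᵀ, with R positive definite and Q positive semidefinite. Then for every positive semidefinite X and every matrix K of compatible dimensions, g(X) ≤ φ(K, X), with equality for K = −A X Cᵀ (C X Cᵀ + R)^{-1}. -/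
open Matrix

/-- `g(X) ≤ φ(K, X)` in the Loewner order for every `K`, with equality at
`K = −A X Cᵀ (C X Cᵀ + R)⁻¹`. -/
theorem g_le_phi {n m : ℕ} (A : Matrix (Fin n) (Fin n) ℝ)
    (C : Matrix (Fin m) (Fin n) ℝ) (Q : Matrix (Fin n) (Fin n) ℝ)
    (R : Matrix (Fin m) (Fin m) ℝ) (hQ : Q.PosSemidef) (hR : R.PosDef)
    (g : Matrix (Fin n) (Fin n) ℝ → Matrix (Fin n) (Fin n) ℝ)
    (hg : ∀ X, g X = A * X * Aᵀ + Q - A * X * Cᵀ * (C * X * Cᵀ + R)⁻¹ * C * X * Aᵀ)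
    (φ : Matrix (Fin n) (Fin m) ℝ → Matrix (Fin n) (Fin n) ℝ → Matrix (Fin n) (Fin n) ℝ)
    (hφ : ∀ K X, φ K X = (A + K * C) * X * (A + K * C)ᵀ + Q + K * R * Kᵀ)
    (X : Matrix (Fin n) (Fin n) ℝ) (hX : X.PosSemidef) :
    (∀ K : Matrix (Fin n) (Fin m) ℝ, (φ K X - g X).PosSemidef) ∧
      g X = φ (-(A * X * Cᵀ * (C * X * Cᵀ + R)⁻¹)) X := by
  set S : Matrix (Fin m) (Fin m) ℝ := C * X * Cᵀ + R with hSdef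
  have hS : S.PosDef := by
    have h1 : (C * X * Cᵀ).PosSemidef := by
      simpa [conjTranspose_eq_transpose_of_trivial] using hX.mul_mul_conjTranspose_same C
    exact Matrix.PosDef.posSemidef_add h1 hR
  have hXt : Xᵀ = X := by
    simpa [conjTranspose_eq_transpose_of_trivial] using hX.isHermitian.eq
  have hSt : Sᵀ = S := by
    simpa [conjTranspose_eq_transpose_of_trivial] using hS.isHermitian.eq
  have hdet : IsUnit S.det := isUnit_iff_isUnit_det S |>.1 hS.isUnit
  have hinv : S⁻¹ * S = 1 := nonsing_inv_mul S hdet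
  have hinv' : S * S⁻¹ = 1 := mul_nonsing_inv S hdet
  have hSit : (S⁻¹)ᵀ = S⁻¹ := by rw [transpose_nonsing_inv, hSt]
  set B : Matrix (Fin n) (Fin m) ℝ := A * X * Cᵀ with hBdef
  have hBt : Bᵀ = C * X * Aᵀ := by
    simp [hBdef, transpose_mul, hXt, Matrix.mul_assoc]
  clear_value S B
  have key : ∀ K : Matrix (Fin n) (Fin m) ℝ,
      φ K X - g X = (K + B * S⁻¹) * S * (K + B * S⁻¹)ᵀ := by
    intro K
    have hT : (K + B * S⁻¹)ᵀ = Kᵀ + S⁻¹ * Bᵀ := by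
      simp [transpose_add, transpose_mul, hSit]
    have e1 : (K + B * S⁻¹) * S = K * S + B := by
      rw [Matrix.add_mul, Matrix.mul_assoc, hinv, Matrix.mul_one]
    have e3 : K * S * (S⁻¹ * Bᵀ) = K * Bᵀ := by
      rw [Matrix.mul_assoc, ← Matrix.mul_assoc S S⁻¹ Bᵀ, hinv', Matrix.one_mul]
    rw [hT, e1, Matrix.add_mul, Matrix.mul_add, Matrix.mul_add, e3, hφ, hg, hBt, hSdef, hBdef]
    simp only [Matrix.add_mul, Matrix.mul_add, transpose_add, transpose_mul, hXt,
      Matrix.mul_assoc]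
    abel
  refine ⟨fun K => ?_, ?_⟩
  · rw [key K]
    simpa [conjTranspose_eq_transpose_of_trivial] using
      hS.posSemidef.mul_mul_conjTranspose_same (K + B * S⁻¹)
  · have h0 := key (-(A * X * Cᵀ * S⁻¹))
    have hz : -(A * X * Cᵀ * S⁻¹) + B * S⁻¹ = 0 := by rw [hBdef]; abel
    rw [hz, Matrix.zero_mul, transpose_zero, Matrix.mul_zero] at h0
    rw [hBdef]
    exact (sub_eq_zero.mp h0).symm
end

section
/- Let 𝓛 be a linear, Loewner-order non-decreasing operator on positive semidefinite n×n Hermitian matrices. If there exists a positive definite P with 𝓛(P) < P (strict Loewner order), then for every positive semidefinite X, 𝓛^k(X) → 0 as k → ∞. -/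
open scoped ComplexOrder

open Matrix

namespace IterateAux

variable {n : ℕ}

/-- Nonnegative real scalar multiple of a PSD matrix is PSD. -/
lemma psd_smul {A : Matrix (Fin n) (Fin n) ℂ} {r : ℝ} (hr : 0 ≤ r)
    (hA : A.PosSemidef) : (r • A).PosSemidef := by
  constructor
  · show (r • A)ᴴ = r • A
    ext i j
    simp [Matrix.conjTranspose_apply, Complex.real_smul, ← hA.1.apply i j,
      Matrix.conjTranspose_apply]
  · intro x
    exact (hA.smul hr).2 x

lemma psd_diag_re_nonneg {A : Matrix (Fin n) (Fin n) ℂ} (hA : A.PosSemidef)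
    (i : Fin n) : 0 ≤ (A i i).re := by
  have h := hA.diag_nonneg (i := i)
  exact (Complex.nonneg_iff.mp h).1

lemma diag_re_le {A B : Matrix (Fin n) (Fin n) ℂ} (h : (B - A).PosSemidef)
    (i : Fin n) : (A i i).re ≤ (B i i).re := by
  have := psd_diag_re_nonneg h i
  simp only [Matrix.sub_apply, Complex.sub_re] at this
  linarith

/-- If all eigenvalues of a Hermitian matrix are at most `c`, then `c•1 - A` is PSD. -/
lemma smul_one_sub_psd {A : Matrix (Fin n) (Fin n) ℂ} (hA : A.IsHermitian)
    {c : ℝ} (h : ∀ i, hA.eigenvalues i ≤ c) :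
    (c • (1 : Matrix (Fin n) (Fin n) ℂ) - A).PosSemidef := by
  set U : Matrix (Fin n) (Fin n) ℂ := (hA.eigenvectorUnitary : Matrix (Fin n) (Fin n) ℂ)
  have hU : U * Uᴴ = 1 := by
    have := (Matrix.mem_unitaryGroup_iff).mp hA.eigenvectorUnitary.2
    simpa [Matrix.star_eq_conjTranspose] using this
  have key : c • (1 : Matrix (Fin n) (Fin n) ℂ) - A
      = U * Matrix.diagonal (fun i => ((c - hA.eigenvalues i : ℝ) : ℂ)) * Uᴴ := by
    have hdiag : Matrix.diagonal (fun i => ((c - hA.eigenvalues i : ℝ) : ℂ))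
        = c • (1 : Matrix (Fin n) (Fin n) ℂ)
          - Matrix.diagonal (RCLike.ofReal ∘ hA.eigenvalues) := by
      ext i j
      by_cases hij : i = j <;>
        simp [hij, Matrix.diagonal_apply, Matrix.one_apply, Complex.real_smul,
          Complex.ofReal_sub]
    rw [hdiag, Matrix.mul_sub, Matrix.sub_mul]
    have h1 : U * (c • (1 : Matrix (Fin n) (Fin n) ℂ)) * Uᴴ
        = c • (1 : Matrix (Fin n) (Fin n) ℂ) := by
      rw [Matrix.mul_smul, Matrix.mul_one, Matrix.smul_mul, hU]
    rw [h1]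
    congr 1
    conv_lhs => rw [hA.spectral_theorem, Unitary.conjStarAlgAut_apply]
    rw [Matrix.star_eq_conjTranspose]
  rw [key]
  apply Matrix.PosSemidef.mul_mul_conjTranspose_same
  refine Matrix.posSemidef_diagonal_iff.mpr fun i => ?_
  exact Complex.zero_le_real.mpr (by linarith [h i])

/-- If all eigenvalues of a Hermitian matrix are at least `c`, then `A - c•1` is PSD. -/
lemma sub_smul_one_psd {A : Matrix (Fin n) (Fin n) ℂ} (hA : A.IsHermitian)
    {c : ℝ} (h : ∀ i, c ≤ hA.eigenvalues i) :
    (A - c • (1 : Matrix (Fin n) (Fin n) ℂ)).PosSemidef := by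
  set U : Matrix (Fin n) (Fin n) ℂ := (hA.eigenvectorUnitary : Matrix (Fin n) (Fin n) ℂ)
  have hU : U * Uᴴ = 1 := by
    have := (Matrix.mem_unitaryGroup_iff).mp hA.eigenvectorUnitary.2
    simpa [Matrix.star_eq_conjTranspose] using this
  have key : A - c • (1 : Matrix (Fin n) (Fin n) ℂ)
      = U * Matrix.diagonal (fun i => ((hA.eigenvalues i - c : ℝ) : ℂ)) * Uᴴ := by
    have hdiag : Matrix.diagonal (fun i => ((hA.eigenvalues i - c : ℝ) : ℂ))
        = Matrix.diagonal (RCLike.ofReal ∘ hA.eigenvalues)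
          - c • (1 : Matrix (Fin n) (Fin n) ℂ) := by
      ext i j
      by_cases hij : i = j <;>
        simp [hij, Matrix.diagonal_apply, Matrix.one_apply, Complex.real_smul,
          Complex.ofReal_sub]
    rw [hdiag, Matrix.mul_sub, Matrix.sub_mul]
    have h1 : U * (c • (1 : Matrix (Fin n) (Fin n) ℂ)) * Uᴴ
        = c • (1 : Matrix (Fin n) (Fin n) ℂ) := by
      rw [Matrix.mul_smul, Matrix.mul_one, Matrix.smul_mul, hU]
    rw [h1]
    congr 1
    conv_lhs => rw [hA.spectral_theorem, Unitary.conjStarAlgAut_apply]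
    rw [Matrix.star_eq_conjTranspose]
  rw [key]
  apply Matrix.PosSemidef.mul_mul_conjTranspose_same
  refine Matrix.posSemidef_diagonal_iff.mpr fun i => ?_
  exact Complex.zero_le_real.mpr (by linarith [h i])

/-- Any Hermitian matrix is dominated by a positive multiple of a positive definite one. -/
lemma exists_smul_sub_psd [Nonempty (Fin n)] {A P : Matrix (Fin n) (Fin n) ℂ}
    (hA : A.IsHermitian) (hP : P.PosDef) :
    ∃ c : ℝ, 0 < c ∧ (c • P - A).PosSemidef := by
  set a : ℝ := 1 + ∑ i, |hA.eigenvalues i| with ha_def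
  have ha : 0 < a := by
    have : 0 ≤ ∑ i, |hA.eigenvalues i| := Finset.sum_nonneg fun i _ => abs_nonneg _
    linarith
  have hbound : ∀ i, hA.eigenvalues i ≤ a := by
    intro i
    have h1 : |hA.eigenvalues i| ≤ ∑ j, |hA.eigenvalues j| :=
      Finset.single_le_sum (f := fun j => |hA.eigenvalues j|)
        (fun j _ => abs_nonneg _) (Finset.mem_univ i)
    have := le_abs_self (hA.eigenvalues i)
    linarith
  have hA1 : (a • (1 : Matrix (Fin n) (Fin n) ℂ) - A).PosSemidef :=
    smul_one_sub_psd hA hbound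
  set ε : ℝ := Finset.univ.inf' Finset.univ_nonempty hP.1.eigenvalues with hε_def
  have hε : 0 < ε := by
    obtain ⟨i, _, hi⟩ := Finset.exists_mem_eq_inf' Finset.univ_nonempty hP.1.eigenvalues
    rw [hε_def, hi]
    exact hP.eigenvalues_pos i
  have hP1 : (P - ε • (1 : Matrix (Fin n) (Fin n) ℂ)).PosSemidef :=
    sub_smul_one_psd hP.1 fun i => Finset.inf'_le _ (Finset.mem_univ i)
  refine ⟨a / ε, div_pos ha hε, ?_⟩
  have hce : a / ε * ε = a := div_mul_cancel₀ _ hε.ne'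
  have key : (a / ε) • P - A
      = (a / ε) • (P - ε • (1 : Matrix (Fin n) (Fin n) ℂ))
        + (a • (1 : Matrix (Fin n) (Fin n) ℂ) - A) := by
    rw [smul_sub, smul_smul, hce]
    abel
  rw [key]
  exact (psd_smul (div_pos ha hε).le hP1).add hA1

/-- Entry bound for PSD matrices. -/
lemma psd_entry_bound {A : Matrix (Fin n) (Fin n) ℂ} (hA : A.PosSemidef)
    (i j : Fin n) : ‖A i j‖ ≤ (A i i).re + (A j j).re := by
  obtain ⟨B, hB⟩ : ∃ B : Matrix (Fin n) (Fin n) ℂ, A = Bᴴ * B := by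
    open scoped MatrixOrder in
    obtain ⟨B, hB⟩ := CStarAlgebra.nonneg_iff_eq_star_mul_self.mp hA.nonneg
    exact ⟨B, hB⟩
  set v : EuclideanSpace ℂ (Fin n) := WithLp.toLp 2 (fun k => B k i) with hv
  set w : EuclideanSpace ℂ (Fin n) := WithLp.toLp 2 (fun k => B k j) with hw
  have hij : A i j = inner ℂ v w := by
    rw [hB]
    simp [Matrix.mul_apply, Matrix.conjTranspose_apply, PiLp.inner_apply,
      RCLike.inner_apply, hv, hw, mul_comm]
  have hii : (A i i).re = ‖v‖ ^ 2 := by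
    have : A i i = inner ℂ v v := by
      rw [hB]
      simp [Matrix.mul_apply, Matrix.conjTranspose_apply, PiLp.inner_apply,
        RCLike.inner_apply, hv, mul_comm, -inner_self_eq_norm_sq_to_K]
    rw [this]
    exact_mod_cast @inner_self_eq_norm_sq ℂ _ _ _ _ v
  have hjj : (A j j).re = ‖w‖ ^ 2 := by
    have : A j j = inner ℂ w w := by
      rw [hB]
      simp [Matrix.mul_apply, Matrix.conjTranspose_apply, PiLp.inner_apply,
        RCLike.inner_apply, hw, mul_comm, -inner_self_eq_norm_sq_to_K]
    rw [this]
    exact_mod_cast @inner_self_eq_norm_sq ℂ _ _ _ _ w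
  have hcs : ‖(inner ℂ v w : ℂ)‖ ≤ ‖v‖ * ‖w‖ := norm_inner_le_norm v w
  rw [hij, hii, hjj]
  nlinarith [norm_nonneg v, norm_nonneg w, norm_nonneg (inner ℂ v w : ℂ)]

end IterateAux

open IterateAux

/-- If a linear, Loewner-monotone operator `𝓛` preserving the positive
semidefinite cone contracts some positive definite matrix strictly
(`𝓛(P) < P`), then `𝓛^k(X) → 0` for every positive semidefinite `X`. -/
theorem iterate_tendsto_zero {n : ℕ}
    (L : Matrix (Fin n) (Fin n) ℂ →ₗ[ℝ] Matrix (Fin n) (Fin n) ℂ)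
    (hpsd : ∀ X : Matrix (Fin n) (Fin n) ℂ, X.PosSemidef → (L X).PosSemidef)
    (hmono : ∀ X Y : Matrix (Fin n) (Fin n) ℂ, (Y - X).PosSemidef →
      (L Y - L X).PosSemidef)
    (P : Matrix (Fin n) (Fin n) ℂ) (hP : P.PosDef) (hLP : (P - L P).PosDef) :
    ∀ X : Matrix (Fin n) (Fin n) ℂ, X.PosSemidef →
      Filter.Tendsto (fun k => (⇑L)^[k] X) Filter.atTop (nhds 0) := by
  rcases Nat.eq_zero_or_pos n with hn | hn
  · subst hn
    intro X hX
    haveI : Subsingleton (Matrix (Fin 0) (Fin 0) ℂ) :=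
      ⟨fun a b => by ext i; exact i.elim0⟩
    have : (fun k => (⇑L)^[k] X) = fun _ => (0 : Matrix (Fin 0) (Fin 0) ℂ) :=
      funext fun k => Subsingleton.elim _ _
    rw [this]
    exact tendsto_const_nhds
  haveI : Nonempty (Fin n) := ⟨⟨0, hn⟩⟩
  -- Find 0 ≤ ρ < 1 with L P ≤ ρ • P
  obtain ⟨c₁, hc₁, h1⟩ := exists_smul_sub_psd hP.1 hLP
  have hδ : 0 < 1 / c₁ := by positivity
  set m : ℝ := min (1 / c₁) 1 with hm_def
  have hm0 : 0 < m := lt_min hδ one_pos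
  have hm1 : m ≤ 1 := min_le_right _ _
  set ρ : ℝ := 1 - m with hρ_def
  have hρ0 : 0 ≤ ρ := by simp [hρ_def]; linarith
  have hρ1 : ρ < 1 := by simp [hρ_def]; linarith
  -- (1/c₁) • (P - L P) - ... : get ((1/c₁) • P ≤ P - L P)
  have h2 : ((P - L P) - (1 / c₁) • P).PosSemidef := by
    have := psd_smul hδ.le h1
    have heq : (1 / c₁) • (c₁ • (P - L P) - P) = (P - L P) - (1 / c₁) • P := by
      rw [smul_sub, smul_smul]
      rw [one_div_mul_cancel hc₁.ne', one_smul]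
    rwa [heq] at this
  have h3 : ((P - L P) - m • P).PosSemidef := by
    have heq : (P - L P) - m • P
        = ((P - L P) - (1 / c₁) • P) + ((1 / c₁ - m) • P) := by
      rw [sub_smul]; abel
    rw [heq]
    exact h2.add (psd_smul (by simp [hm_def]) hP.posSemidef)
  have hkey : (ρ • P - L P).PosSemidef := by
    have heq : ρ • P - L P = (P - L P) - m • P := by
      rw [hρ_def, sub_smul, one_smul]; abel
    rwa [heq]
  -- Iterates of P
  have hiterP : ∀ k : ℕ, (ρ ^ k • P - (⇑L)^[k] P).PosSemidef := by
    intro k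
    induction k with
    | zero => simpa using (Matrix.PosSemidef.zero (n := Fin n) (R := ℂ))
    | succ k ih =>
      have hstep := hmono _ _ ih
      rw [_root_.map_smul] at hstep
      have h1 : (ρ ^ k • (ρ • P - L P)).PosSemidef :=
        psd_smul (pow_nonneg hρ0 k) hkey
      have heq : ρ ^ (k + 1) • P - (⇑L)^[k + 1] P
          = ρ ^ k • (ρ • P - L P) + (ρ ^ k • L P - L ((⇑L)^[k] P)) := by
        rw [Function.iterate_succ_apply', pow_succ]
        module
      rw [heq]
      exact h1.add hstep
  intro X hX
  obtain ⟨c, hc, hcP⟩ := exists_smul_sub_psd hX.1 hP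
  -- L^[k] X is PSD
  have hXk : ∀ k : ℕ, ((⇑L)^[k] X).PosSemidef := by
    intro k
    induction k with
    | zero => simpa using hX
    | succ k ih => rw [Function.iterate_succ_apply']; exact hpsd _ ih
  -- L^[k] (c • P) = c • L^[k] P
  have hsmul_iter : ∀ k : ℕ, (⇑L)^[k] (c • P) = c • (⇑L)^[k] P := by
    intro k
    induction k with
    | zero => simp
    | succ k ih => rw [Function.iterate_succ_apply', Function.iterate_succ_apply', ih, _root_.map_smul]
  -- L^[k] X ≤ L^[k] (c • P)
  have hmono_iter : ∀ k : ℕ, ((⇑L)^[k] (c • P) - (⇑L)^[k] X).PosSemidef := by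
    intro k
    induction k with
    | zero => simpa using hcP
    | succ k ih =>
      rw [Function.iterate_succ_apply', Function.iterate_succ_apply']
      exact hmono _ _ ih
  -- Combine: (c * ρ ^ k) • P - L^[k] X is PSD
  have hbound : ∀ k : ℕ, ((c * ρ ^ k) • P - (⇑L)^[k] X).PosSemidef := by
    intro k
    have h1 : (c • (ρ ^ k • P - (⇑L)^[k] P)).PosSemidef := psd_smul hc.le (hiterP k)
    have heq : (c * ρ ^ k) • P - (⇑L)^[k] X
        = c • (ρ ^ k • P - (⇑L)^[k] P) + ((⇑L)^[k] (c • P) - (⇑L)^[k] X) := by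
      rw [hsmul_iter]
      module
    rw [heq]
    exact h1.add (hmono_iter k)
  -- Entrywise convergence
  refine tendsto_pi_nhds.mpr ?_
  intro i
  rw [tendsto_pi_nhds]
  intro j
  show Filter.Tendsto (fun k => ((⇑L)^[k] X) i j) Filter.atTop (nhds 0)
  rw [tendsto_zero_iff_norm_tendsto_zero]
  have hdiag : ∀ (k : ℕ) (a : Fin n),
      (((⇑L)^[k] X) a a).re ≤ (c * ρ ^ k) * (P a a).re := by
    intro k a
    have := diag_re_le (hbound k) a
    rw [Matrix.smul_apply, Complex.smul_re, smul_eq_mul] at this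
    exact this
  have hentry : ∀ k : ℕ, ‖((⇑L)^[k] X) i j‖ ≤ ρ ^ k * (c * ((P i i).re + (P j j).re)) := by
    intro k
    calc ‖((⇑L)^[k] X) i j‖
        ≤ (((⇑L)^[k] X) i i).re + (((⇑L)^[k] X) j j).re := psd_entry_bound (hXk k) i j
      _ ≤ (c * ρ ^ k) * (P i i).re + (c * ρ ^ k) * (P j j).re := by
          have h1 := hdiag k i
          have h2 := hdiag k j
          linarith
      _ = ρ ^ k * (c * ((P i i).re + (P j j).re)) := by ring
  have hg : Filter.Tendsto (fun k => ρ ^ k * (c * ((P i i).re + (P j j).re)))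
      Filter.atTop (nhds 0) := by
    have := (tendsto_pow_atTop_nhds_zero_of_lt_one hρ0 hρ1).mul_const
      (c * ((P i i).re + (P j j).re))
    simpa using this
  exact squeeze_zero (fun k => norm_nonneg _) hentry hg
end
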